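/- A Herglotz wave function $v_g(x) = \int_{\mathbb{S}^1} e^{ikx\cdot d} g(d)\,ds(d)$ with kernel $g \in L^2(\mathbb{S}^1)$ vanishes identically on $\mathbb{R}^2$ if and only if $g = 0$ almost everywhere on $\mathbb{S}^1$. -/

import Mathlib

open MeasureTheory Filter Metric

noncomputable section

abbrev Plane := EuclideanSpace ℝ (Fin 2)

def dir (θ : ℝ) : Plane := (WithLp.equiv 2 (Fin 2 → ℝ)).symm ![Real.cos θ, Real.sin θ]

def besselJ (n : ℕ) (t : ℝ) : ℝ :=
  (1 / Real.pi) * ∫ τ in (0:ℝ)..Real.pi, Real.cos (n * τ - t * Real.sin τ)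

def besselY (n : ℕ) (t : ℝ) : ℝ :=
  (1 / Real.pi) * (∫ τ in (0:ℝ)..Real.pi, Real.sin (t * Real.sin τ - n * τ))
    - (1 / Real.pi) * ∫ τ in Set.Ioi (0:ℝ),
        (Real.exp (n * τ) + (-1 : ℝ) ^ n * Real.exp (-(n * τ))) * Real.exp (-t * Real.sinh τ)

def hankelH1 (n : ℕ) (t : ℝ) : ℂ := (besselJ n t : ℂ) + Complex.I * (besselY n t : ℂ)

def uBinf (k R θ : ℝ) : ℂ :=
  -Complex.exp (-(Real.pi / 4 : ℂ) * Complex.I) * (Real.sqrt (2 / (Real.pi * k)) : ℂ) *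
    ((besselJ 0 (k * R) : ℂ) / hankelH1 0 (k * R)
      + 2 * ∑' n : ℕ, ((besselJ (n + 1) (k * R) : ℂ) / hankelH1 (n + 1) (k * R))
          * (Real.cos ((n + 1) * θ) : ℂ))

def lap (u : Plane → ℂ) (x : Plane) : ℂ :=
  ∑ i : Fin 2, deriv (fun t : ℝ => deriv (fun s : ℝ => u (x + s • EuclideanSpace.single i 1)) t) 0

def radialDeriv (u : Plane → ℂ) (x : Plane) : ℂ :=
  deriv (fun t : ℝ => u (t • (‖x‖⁻¹ • x))) ‖x‖

def Sommerfeld (k : ℝ) (u : Plane → ℂ) : Prop :=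
  ∀ ε > 0, ∃ R₀ : ℝ, ∀ x : Plane, R₀ ≤ ‖x‖ →
    ‖(Real.sqrt ‖x‖ : ℂ) * (radialDeriv u x - Complex.I * k * u x)‖ < ε

def IsFarFieldOf (k : ℝ) (us uinf : Plane → ℂ) : Prop :=
  ∃ C R₀ : ℝ, 0 < R₀ ∧ ∀ x : Plane, R₀ ≤ ‖x‖ →
    ‖us x - Complex.exp ((Real.pi / 4 : ℂ) * Complex.I) / (Real.sqrt (8 * k * Real.pi) : ℂ)
        * (Complex.exp (Complex.I * (k * ‖x‖ : ℝ)) / (Real.sqrt ‖x‖ : ℂ))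
        * uinf (‖x‖⁻¹ • x)‖ ≤ C / ‖x‖ ^ ((3:ℝ) / 2)

def herglotz (k : ℝ) (g : ℝ → ℂ) (x : Plane) : ℂ :=
  ∫ θ in (0:ℝ)..(2 * Real.pi), Complex.exp (Complex.I * (k * inner ℝ x (dir θ) : ℝ)) * g θ

def farFieldOp (k R : ℝ) (z : Plane) (g : ℝ → ℂ) (φ : ℝ) : ℂ :=
  ∫ ψ in (0:ℝ)..(2 * Real.pi),
    Complex.exp (Complex.I * (k * inner ℝ z (dir ψ - dir φ) : ℝ)) * uBinf k R (φ - ψ) * g ψ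

def muS : Measure ℝ := volume.restrict (Set.Ioc 0 (2 * Real.pi))

def H1normSq (S : Set Plane) (w : Plane → ℂ) : ℝ :=
  ∫ x in S, (‖w x‖ ^ 2 + ‖fderiv ℝ w x‖ ^ 2)


namespace HerglotzAux

instance : Fact (0 < 2 * Real.pi) := ⟨by positivity⟩

abbrev Sph := Metric.sphere (0 : Plane) 1

lemma dir_mem (θ : ℝ) : dir θ ∈ Sph := by
  rw [mem_sphere_zero_iff_norm, EuclideanSpace.norm_eq]
  simp [dir, Fin.sum_univ_two]

def dirS (θ : ℝ) : Sph := ⟨dir θ, dir_mem θ⟩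

lemma continuous_dirS : Continuous dirS := by
  apply Continuous.subtype_mk
  show Continuous dir
  exact (PiLp.continuous_toLp 2 (fun _ : Fin 2 => ℝ)).comp
    (continuous_pi fun i => by fin_cases i <;> simp <;> fun_prop)

def F (k : ℝ) (x : Plane) : C(Sph, ℂ) :=
  ⟨fun d => Complex.exp (Complex.I * (k * inner ℝ x (d : Plane) : ℝ)),
   Complex.continuous_exp.comp <| continuous_const.mul <| Complex.continuous_ofReal.comp <|
     continuous_const.mul <| (continuous_const.inner continuous_subtype_val)⟩

lemma F_mul (k : ℝ) (x y : Plane) : F k x * F k y = F k (x + y) := by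
  ext d
  simp only [F, ContinuousMap.mul_apply, ContinuousMap.coe_mk, ← Complex.exp_add]
  rw [← mul_add, ← Complex.ofReal_add, ← mul_add, inner_add_left]

lemma F_zero (k : ℝ) : F k 0 = 1 := by ext d; simp [F]

lemma F_star (k : ℝ) (x : Plane) : star (F k x) = F k (-x) := by
  ext d
  simp only [F, ContinuousMap.star_apply, ContinuousMap.coe_mk]
  show (starRingEnd ℂ) _ = _
  rw [← Complex.exp_conj, inner_neg_left]
  congr 1
  simp [Complex.ext_iff]

def Aalg (k : ℝ) : StarSubalgebra ℂ C(Sph, ℂ) where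
  carrier := Submodule.span ℂ (Set.range (F k))
  mul_mem' := by
    intro a b ha hb
    have h := Submodule.mul_mem_mul ha hb
    rw [Submodule.span_mul_span] at h
    refine Submodule.span_le.mpr ?_ h
    rintro f ⟨u, ⟨xu, rfl⟩, v, ⟨xv, rfl⟩, rfl⟩
    show F k xu * F k xv ∈ _
    rw [F_mul]
    exact Submodule.subset_span ⟨_, rfl⟩
  one_mem' := by
    rw [← F_zero k]; exact Submodule.subset_span ⟨_, rfl⟩
  add_mem' := fun ha hb => Submodule.add_mem _ ha hb
  zero_mem' := Submodule.zero_mem _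
  algebraMap_mem' := by
    intro c
    have h1 : algebraMap ℂ C(Sph, ℂ) c = c • (1 : C(Sph, ℂ)) := by
      simp [Algebra.algebraMap_eq_smul_one]
    show algebraMap ℂ C(Sph, ℂ) c ∈ Submodule.span ℂ (Set.range (F k))
    rw [h1, ← F_zero k]
    exact Submodule.smul_mem _ _ (Submodule.subset_span ⟨_, rfl⟩)
  star_mem' := by
    intro a ha
    induction ha using Submodule.span_induction with
    | mem f hf => obtain ⟨x, rfl⟩ := hf; rw [F_star]; exact Submodule.subset_span ⟨_, rfl⟩
    | zero => simp only [star_zero]; exact Submodule.zero_mem _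
    | add f g _ _ hf hg => rw [star_add]; exact Submodule.add_mem _ hf hg
    | smul c f _ hf => rw [star_smul]; exact Submodule.smul_mem _ _ hf

lemma Aalg_sep (k : ℝ) (hk : 0 < k) : (Aalg k).SeparatesPoints := by
  intro d1 d2 hne
  have hpne : (d1 : Plane) ≠ (d2 : Plane) := fun h => hne (Subtype.ext h)
  set p : Plane := (d1 : Plane) - (d2 : Plane) with hp_def
  have hp : p ≠ 0 := sub_ne_zero.mpr hpne
  have hnp : (0:ℝ) < ‖p‖ := norm_pos_iff.mpr hp
  set t : ℝ := Real.pi / (k * ‖p‖ ^ 2) with ht_def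
  refine ⟨_, ⟨F k (t • p), Submodule.subset_span ⟨_, rfl⟩, rfl⟩, ?_⟩
  simp only [F, ContinuousMap.coe_mk]
  intro heq
  have hdiff : (k * inner ℝ (t • p) (d1 : Plane) : ℝ) - (k * inner ℝ (t • p) (d2 : Plane) : ℝ)
      = Real.pi := by
    rw [← mul_sub, ← inner_sub_right, ← hp_def, real_inner_smul_left,
      real_inner_self_eq_norm_sq, ht_def]
    field_simp
  have h1 : Complex.exp (Complex.I * (k * inner ℝ (t • p) (d1 : Plane) : ℝ)
      - Complex.I * (k * inner ℝ (t • p) (d2 : Plane) : ℝ)) = 1 := by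
    rw [Complex.exp_sub, heq, div_self (Complex.exp_ne_zero _)]
  rw [← mul_sub, ← Complex.ofReal_sub, hdiff] at h1
  rw [mul_comm, Complex.exp_pi_mul_I] at h1
  norm_num at h1

end HerglotzAux

namespace HerglotzAux

instance : IsFiniteMeasure muS := by
  constructor
  rw [muS, Measure.restrict_apply_univ]
  exact measure_Ioc_lt_top

lemma integrable_g {g : ℝ → ℂ} (hg : MemLp g 2 muS) : Integrable g muS :=
  memLp_one_iff_integrable.mp (hg.mono_exponent (by norm_num))

/-- Key step: the integral of every continuous function on the sphere against g vanishes. -/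
lemma all_integrals_vanish (k : ℝ) (hk : 0 < k) (g : ℝ → ℂ) (hg : MemLp g 2 muS)
    (h0 : ∀ x : Plane, herglotz k g x = 0) (f : C(Sph, ℂ)) :
    ∫ θ, f (dirS θ) * g θ ∂muS = 0 := by
  have hgi : Integrable g muS := integrable_g hg
  have hint : ∀ f : C(Sph, ℂ), Integrable (fun θ => f (dirS θ) * g θ) muS := fun f =>
    hgi.bdd_mul ((f.continuous.comp continuous_dirS).aestronglyMeasurable)
      (Filter.Eventually.of_forall fun θ => f.norm_coe_le_norm _)
  set Λ₀ : C(Sph, ℂ) →ₗ[ℂ] ℂ :=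
    { toFun := fun f => ∫ θ, f (dirS θ) * g θ ∂muS
      map_add' := by
        intro f₁ f₂
        simp only [ContinuousMap.add_apply]
        rw [← integral_add (hint f₁) (hint f₂)]
        congr 1; ext θ; ring
      map_smul' := by
        intro c f
        simp only [ContinuousMap.smul_apply, smul_eq_mul, RingHom.id_apply, mul_assoc,
          integral_const_mul] } with hΛ₀
  set Λ : C(Sph, ℂ) →L[ℂ] ℂ :=
    Λ₀.mkContinuous (∫ θ, ‖g θ‖ ∂muS) (by
      intro f
      have h1 : ‖∫ θ, f (dirS θ) * g θ ∂muS‖ ≤ ∫ θ, ‖f (dirS θ) * g θ‖ ∂muS :=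
        norm_integral_le_integral_norm _
      have h2 : ∫ θ, ‖f (dirS θ) * g θ‖ ∂muS ≤ ∫ θ, ‖f‖ * ‖g θ‖ ∂muS := by
        apply integral_mono (hint f).norm (hgi.norm.const_mul _)
        intro θ
        show ‖f (dirS θ) * g θ‖ ≤ ‖f‖ * ‖g θ‖
        rw [norm_mul]
        exact mul_le_mul_of_nonneg_right (f.norm_coe_le_norm _) (norm_nonneg _)
      calc ‖Λ₀ f‖ ≤ ∫ θ, ‖f‖ * ‖g θ‖ ∂muS := le_trans h1 h2
        _ = (∫ θ, ‖g θ‖ ∂muS) * ‖f‖ := by rw [integral_const_mul, mul_comm]) with hΛ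
  have hgen : ∀ x : Plane, Λ (F k x) = 0 := by
    intro x
    have := h0 x
    rw [herglotz, intervalIntegral.integral_of_le Real.two_pi_pos.le] at this
    exact this
  have hspan : ∀ f ∈ Aalg k, Λ f = 0 := by
    intro f hf
    have : (Aalg k).toSubalgebra.toSubmodule ≤ LinearMap.ker (Λ : C(Sph, ℂ) →ₗ[ℂ] ℂ) := by
      show Submodule.span ℂ (Set.range (F k)) ≤ _
      rw [Submodule.span_le]
      rintro f' ⟨x, rfl⟩
      exact hgen x
    exact this hf
  have hdense := ContinuousMap.starSubalgebra_topologicalClosure_eq_top_of_separatesPoints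
    (Aalg k) (Aalg_sep k hk)
  have hcl : f ∈ closure ((Aalg k : Set C(Sph, ℂ))) := by
    have : f ∈ (Aalg k).topologicalClosure := by rw [hdense]; trivial
    exact this
  have : Λ f = 0 := by
    have hsub : (Aalg k : Set C(Sph, ℂ)) ⊆ Λ ⁻¹' {0} := fun f' hf' => hspan f' hf'
    have hclosed : IsClosed (Λ ⁻¹' ({0} : Set ℂ)) := isClosed_singleton.preimage Λ.continuous
    exact closure_minimal hsub hclosed hcl
  exact this

/-- The basic character on the sphere. -/
def cchar : C(Sph, ℂ) :=
  ⟨fun d => ((d : Plane) 0 : ℂ) + ((d : Plane) 1 : ℂ) * Complex.I, by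
    apply Continuous.add
    · exact Complex.continuous_ofReal.comp ((PiLp.continuous_apply 2 (fun _ : Fin 2 => ℝ) 0).comp continuous_subtype_val)
    · exact (Complex.continuous_ofReal.comp
        ((PiLp.continuous_apply 2 (fun _ : Fin 2 => ℝ) 1).comp continuous_subtype_val)).mul continuous_const⟩

lemma cchar_dirS (θ : ℝ) : cchar (dirS θ) = Complex.exp (θ * Complex.I) := by
  simp only [cchar, ContinuousMap.coe_mk, dirS, dir]
  rw [Complex.exp_mul_I]
  simp [Complex.ofReal_cos, Complex.ofReal_sin]

lemma star_cchar_dirS (θ : ℝ) : (star cchar) (dirS θ) = Complex.exp (-θ * Complex.I) := by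
  rw [ContinuousMap.star_apply, cchar_dirS]
  show (starRingEnd ℂ) _ = _
  rw [← Complex.exp_conj]
  congr 1
  simp [Complex.ext_iff]

lemma key_int (k : ℝ) (hk : 0 < k) (g : ℝ → ℂ) (hg : MemLp g 2 muS)
    (h0 : ∀ x : Plane, herglotz k g x = 0) (n : ℤ) :
    ∫ θ, Complex.exp (n * θ * Complex.I) * g θ ∂muS = 0 := by
  obtain ⟨m, rfl | rfl⟩ := n.eq_nat_or_neg
  · have := all_integrals_vanish k hk g hg h0 (cchar ^ m)
    rw [← this]
    congr 1; ext θ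
    rw [ContinuousMap.pow_apply, cchar_dirS, ← Complex.exp_nat_mul]
    push_cast; ring_nf
  · have := all_integrals_vanish k hk g hg h0 ((star cchar) ^ m)
    rw [← this]
    congr 1; ext θ
    rw [ContinuousMap.pow_apply, star_cchar_dirS, ← Complex.exp_nat_mul]
    push_cast; ring_nf

end HerglotzAux

namespace HerglotzAux

lemma forward (k : ℝ) (hk : 0 < k) (g : ℝ → ℂ) (hg : MemLp g 2 muS)
    (h0 : ∀ x : Plane, herglotz k g x = 0) : g =ᵐ[muS] 0 := by
  obtain ⟨g', hg'sm, hgg'⟩ : ∃ g', StronglyMeasurable g' ∧ g =ᵐ[muS] g' :=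
    ⟨hg.1.mk g, hg.1.stronglyMeasurable_mk, hg.1.ae_eq_mk⟩
  have hrestr : volume.restrict (Set.Ioc (0:ℝ) (0 + 2*Real.pi)) = muS := by
    rw [zero_add]; rfl
  set G : AddCircle (2*Real.pi) → ℂ := AddCircle.liftIoc (2*Real.pi) 0 g' with hG_def
  have hGm : Measurable G := by
    have : G = (fun y : Set.Ioc (0:ℝ) (0+2*Real.pi) => g' y) ∘
        (AddCircle.measurableEquivIoc (2*Real.pi) 0) := rfl
    rw [this]
    exact (hg'sm.measurable.comp measurable_subtype_coe).comp
      (AddCircle.measurableEquivIoc (2*Real.pi) 0).measurable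
  have hGmk : ∀ᵐ θ : ℝ ∂muS, G (θ : AddCircle (2*Real.pi)) = g' θ := by
    rw [← hrestr]
    filter_upwards [ae_restrict_mem measurableSet_Ioc] with θ hθ
    exact AddCircle.liftIoc_coe_apply hθ
  have hmp := AddCircle.measurePreserving_mk (2*Real.pi) 0
  rw [hrestr] at hmp
  have hG2vol : MemLp G 2 (volume : Measure (AddCircle (2*Real.pi))) := by
    rw [← hmp.map_eq,
      memLp_map_measure_iff hGm.aestronglyMeasurable AddCircle.measurable_mk'.aemeasurable]
    have hGmk' : g' =ᵐ[muS] (G ∘ (QuotientAddGroup.mk : ℝ → AddCircle (2*Real.pi))) := by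
      filter_upwards [hGmk] with θ h
      exact h.symm
    exact MemLp.ae_eq (hgg'.trans hGmk') hg
  have hT0 : (ENNReal.ofReal (2*Real.pi)) ≠ 0 := by
    simp [ENNReal.ofReal_eq_zero]
    positivity
  have hG2 : MemLp G 2 (AddCircle.haarAddCircle : Measure (AddCircle (2*Real.pi))) := by
    have h' : (AddCircle.haarAddCircle : Measure (AddCircle (2*Real.pi)))
        = (ENNReal.ofReal (2*Real.pi))⁻¹ • (volume : Measure (AddCircle (2*Real.pi))) := by
      rw [AddCircle.volume_eq_smul_haarAddCircle, smul_smul,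
        ENNReal.inv_mul_cancel hT0 ENNReal.ofReal_ne_top, one_smul]
    rw [h']
    exact hG2vol.smul_measure (ENNReal.inv_ne_top.mpr hT0)
  have hcoeff : ∀ n : ℤ, fourierCoeff G n = 0 := by
    intro n
    rw [fourierCoeff_eq_intervalIntegral G n 0]
    have hX : (∫ x in (0:ℝ)..0 + 2*Real.pi,
        (fourier (-n) (x : AddCircle (2*Real.pi)) : ℂ) • G ↑x) = 0 := by
      rw [zero_add, intervalIntegral.integral_of_le Real.two_pi_pos.le]
      have hkey := key_int k hk g hg h0 (-n)
      unfold muS at hkey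
      rw [← hkey]
      apply integral_congr_ae
      have hgg'' := hgg'
      unfold muS at hgg''
      filter_upwards [ae_restrict_mem measurableSet_Ioc, hgg''] with θ hθ hθ'
      have hGθ : G (θ : AddCircle (2*Real.pi)) = g' θ := by
        rw [hG_def]
        exact AddCircle.liftIoc_coe_apply (by rw [zero_add]; exact hθ)
      rw [smul_eq_mul, hGθ, fourier_coe_apply, ← hθ']
      congr 2
      have h2π : ((2*Real.pi : ℝ) : ℂ) ≠ 0 := by
        simp [Complex.ofReal_ne_zero]
      rw [div_eq_iff h2π]
      push_cast
      ring
    rw [hX, smul_zero]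
  have hrepr : (fourierBasis (T := 2*Real.pi)).repr (hG2.toLp G) = 0 := by
    ext n
    rw [fourierBasis_repr]
    have heq : fourierCoeff (⇑(hG2.toLp G) : AddCircle (2*Real.pi) → ℂ) n = fourierCoeff G n := by
      apply integral_congr_ae
      filter_upwards [hG2.coeFn_toLp] with x hx
      rw [hx]
    rw [heq, hcoeff n]
    simp
  have hLp0 : hG2.toLp G = 0 := by
    simpa using (fourierBasis (T := 2*Real.pi)).repr.map_eq_zero_iff.mp hrepr
  have hGhaar : G =ᵐ[(AddCircle.haarAddCircle : Measure (AddCircle (2*Real.pi)))] 0 := by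
    have h1 : hG2.toLp G = (MemLp.zero :
        MemLp (0 : AddCircle (2*Real.pi) → ℂ) 2 AddCircle.haarAddCircle).toLp 0 := by
      rw [hLp0, MemLp.toLp_zero]
    exact (MemLp.toLp_eq_toLp_iff hG2 MemLp.zero).mp h1
  have hGvol : ∀ᵐ x ∂(volume : Measure (AddCircle (2*Real.pi))), G x = 0 := by
    rw [AddCircle.volume_eq_smul_haarAddCircle]
    exact Measure.ae_smul_measure hGhaar _
  have hback : ∀ᵐ θ : ℝ ∂muS, G (θ : AddCircle (2*Real.pi)) = 0 := by
    rw [← hmp.map_eq] at hGvol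
    have hms : MeasurableSet {y : AddCircle (2*Real.pi) | G y = 0} :=
      hGm (measurableSet_singleton 0)
    exact (MeasureTheory.ae_map_iff AddCircle.measurable_mk'.aemeasurable hms).mp hGvol
  filter_upwards [hback, hGmk, hgg'] with θ h1 h2 h3
  simp only [Pi.zero_apply]
  rw [h3, ← h2, h1]

end HerglotzAux

/-- A Herglotz wave function vanishes identically iff its kernel vanishes a.e. -/
theorem herglotz_vanishes_iff_kernel_zero (k : ℝ) (hk : 0 < k)
    (g : ℝ → ℂ) (hg : MemLp g 2 muS) :
    (∀ x : Plane, herglotz k g x = 0) ↔ g =ᵐ[muS] 0 := by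
  constructor
  · exact HerglotzAux.forward k hk g hg
  · intro hga x
    rw [herglotz, intervalIntegral.integral_of_le Real.two_pi_pos.le]
    have hga' := hga
    unfold muS at hga'
    have h : (fun θ => Complex.exp (Complex.I * (k * inner ℝ x (dir θ) : ℝ)) * g θ)
        =ᵐ[volume.restrict (Set.Ioc (0:ℝ) (2*Real.pi))] 0 := by
      filter_upwards [hga'] with θ hθ
      simp [hθ]
    exact integral_eq_zero_of_ae h
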